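/- Let F be a field, n ≥ 1, and let C_n be the oriented n-cycle quiver: vertex set ℤ/nℤ with, for each i, one arrow from i to i+1. Let (A, b) be a path algebra of C_n over F. Then A satisfies no nonzero multilinear identity of degree less than 2n: for every d with 1 ≤ d ≤ 2n−1 and every family of scalars (c_σ)_{σ ∈ S_d}, if Σ_{σ ∈ S_d} c_σ a_{σ(1)}a_{σ(2)}⋯a_{σ(d)} = 0 for all a₁,…,a_d ∈ A, then c_σ = 0 for every σ ∈ S_d. (Hence the minimal degree of a polynomial identity of A is 2n.) -/

import Mathlib

structure Quiv where
  V : Type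
  A : Type
  [fintV : Fintype V]
  [fintA : Fintype A]
  s : A → V
  t : A → V

attribute [instance] Quiv.fintV Quiv.fintA

inductive Quiv.IsPathFrom (Q : Quiv) : Q.V → List Q.A → Q.V → Prop
  | nil (v : Q.V) : Q.IsPathFrom v [] v
  | cons {l : List Q.A} {v : Q.V} (a : Q.A) :
      Q.IsPathFrom (Q.t a) l v → Q.IsPathFrom (Q.s a) (a :: l) v

/-- A path in a quiver: a start vertex, a compatible list of arrows, and an end vertex. -/
structure Quiv.QPath (Q : Quiv) where
  src : Q.V
  arrows : List Q.A
  tgt : Q.V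
  isPath : Q.IsPathFrom src arrows tgt

theorem Quiv.IsPathFrom.append {Q : Quiv} {u v w : Q.V} {l l' : List Q.A}
    (h1 : Q.IsPathFrom u l v) : Q.IsPathFrom v l' w → Q.IsPathFrom u (l ++ l') w := by
  induction h1 with
  | nil _ => exact id
  | cons a _ ih => exact fun h2 => .cons a (ih h2)

/-- The lazy path at a vertex. -/
def Quiv.QPath.lazy (Q : Quiv) (v : Q.V) : Q.QPath := ⟨v, [], v, .nil v⟩

/-- Concatenation of composable paths. -/
def Quiv.QPath.comp {Q : Quiv} (p q : Q.QPath) (h : p.tgt = q.src) : Q.QPath :=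
  ⟨p.src, p.arrows ++ q.arrows, q.tgt, p.isPath.append (h.symm ▸ q.isPath)⟩

/-- The length-one path given by a single arrow. -/
def Quiv.QPath.ofArrow (Q : Quiv) (a : Q.A) : Q.QPath :=
  ⟨Q.s a, [a], Q.t a, .cons a (.nil _)⟩

/-- A path algebra of the quiver `Q` over `F`: an `F`-algebra `A` together with a basis
`b` indexed by the paths of `Q`, multiplying by concatenation. -/
structure PathAlgebra (F : Type) [Field F] (Q : Quiv) (A : Type) [Ring A] [Algebra F A] where
  b : Q.QPath → A
  indep : LinearIndependent F b
  spans : Submodule.span F (Set.range b) = ⊤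
  mul_comp : ∀ (p q : Q.QPath) (h : p.tgt = q.src), b p * b q = b (p.comp q h)
  mul_zero : ∀ p q : Q.QPath, p.tgt ≠ q.src → b p * b q = 0
  sum_lazy : ∑ v : Q.V, b (Quiv.QPath.lazy Q v) = 1

/-- `f` is a polynomial identity for the `F`-algebra `A`. -/
def IsPolyId (F : Type) [Field F] (A : Type) [Ring A] [Algebra F A]
    (f : FreeAlgebra F ℕ) : Prop :=
  ∀ φ : FreeAlgebra F ℕ →ₐ[F] A, φ f = 0

/-- `A` is a PI algebra: it has a nonzero polynomial identity. -/
def IsPI (F : Type) [Field F] (A : Type) [Ring A] [Algebra F A] : Prop :=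
  ∃ f : FreeAlgebra F ℕ, f ≠ 0 ∧ IsPolyId F A f

/-- A cycle: a nonempty closed path with pairwise distinct source vertices. -/
def Quiv.QPath.IsCycle {Q : Quiv} (c : Q.QPath) : Prop :=
  c.arrows ≠ [] ∧ c.tgt = c.src ∧ (c.arrows.map Q.s).Nodup

/-- The standard identity `St_N` holds in `A`. -/
def SatisfiesStandardIdentity (A : Type) [Ring A] (N : ℕ) : Prop :=
  ∀ a : Fin N → A,
    ∑ σ : Equiv.Perm (Fin N), (Equiv.Perm.sign σ : ℤ) • (List.ofFn fun i => a (σ i)).prod = 0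

/-- The oriented `n`-cycle quiver: vertices `ℤ/nℤ` and, for each `i`, one arrow `i → i+1`. -/
def CnQuiver (n : ℕ) (hn : 0 < n) : Quiv where
  V := ZMod n
  A := ZMod n
  fintV := @ZMod.fintype n ⟨by omega⟩
  fintA := @ZMod.fintype n ⟨by omega⟩
  s := fun i => i
  t := fun i => i + 1

section Aux

variable {F : Type} [Field F] {Q : Quiv} {A : Type} [Ring A] [Algebra F A]

/-- If a list of paths is composable, the product of basis elements is a basis element. -/
lemma PathAlgebra.prod_of_chain (P : PathAlgebra F Q A) :
    ∀ (L : List Q.QPath) (q : Q.QPath),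
      List.Chain (fun x y => x.tgt = y.src) q L →
      ∃ r : Q.QPath, P.b q * (L.map P.b).prod = P.b r := by
  intro L
  induction L with
  | nil => intro q _; exact ⟨q, by simp⟩
  | cons h t ih =>
      intro q hch
      simp only [List.Chain] at hch
      rw [List.chain_cons] at hch
      obtain ⟨h1, h2⟩ := hch
      have hch' : List.Chain (fun x y => x.tgt = y.src) (q.comp h h1) t := by
        cases t with
        | nil => exact .nil
        | cons y t' =>
            simp only [List.Chain]
            rw [List.chain_cons] at h2 ⊢
            exact ⟨h2.1, h2.2⟩
      obtain ⟨r, hr⟩ := ih (q.comp h h1) hch'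
      exact ⟨r, by rw [List.map_cons, List.prod_cons, ← mul_assoc, P.mul_comp q h h1, hr]⟩

/-- If a list of paths is not composable, the product of basis elements is zero. -/
lemma PathAlgebra.prod_of_not_chain (P : PathAlgebra F Q A) :
    ∀ (L : List Q.QPath) (q : Q.QPath),
      ¬ List.Chain (fun x y => x.tgt = y.src) q L →
      P.b q * (L.map P.b).prod = 0 := by
  intro L
  induction L with
  | nil => intro q hch; exact absurd List.Chain.nil hch
  | cons h t ih =>
      intro q hch
      simp only [List.Chain] at hch
      rw [List.chain_cons] at hch
      push_neg at hch
      rw [List.map_cons, List.prod_cons, ← mul_assoc]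
      by_cases h1 : q.tgt = h.src
      · rw [P.mul_comp q h h1]
        have h2 : ¬ List.Chain (fun x y => x.tgt = y.src) (q.comp h h1) t := by
          intro hcontra
          apply hch h1
          cases t with
          | nil => exact .singleton _
          | cons y t' =>
              simp only [List.Chain] at hcontra
              rw [List.chain_cons] at hcontra ⊢
              exact ⟨hcontra.1, hcontra.2⟩
        exact ih (q.comp h h1) h2
      · rw [P.mul_zero q h h1, zero_mul]

lemma chain_ofFn {α : Type*} (R : α → α → Prop) :
    ∀ (m : ℕ) (f : Fin (m + 1) → α),
      List.Chain R (f 0) (List.ofFn fun i : Fin m => f i.succ) ↔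
        ∀ i : Fin m, R (f i.castSucc) (f i.succ) := by
  intro m
  induction m with
  | zero => intro f; simp [List.Chain]
  | succ m ih =>
      intro f
      rw [List.ofFn_succ]
      simp only [List.Chain]
      rw [List.chain_cons]
      have := ih (fun j => f j.succ)
      simp only [List.Chain] at this
      simp only [Fin.succ_zero_eq_one] at this ⊢
      rw [show (List.ofFn fun i : Fin m => f (i.succ.succ)) =
            (List.ofFn fun i : Fin m => f ((i.succ : Fin (m+1)).succ)) from rfl]
      rw [this]
      constructor
      · rintro ⟨h0, hs⟩ i
        rcases Fin.eq_zero_or_eq_succ i with rfl | ⟨j, rfl⟩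
        · simpa using h0
        · have := hs j
          rwa [Fin.succ_castSucc] at this
      · intro h
        refine ⟨by simpa using h 0, fun j => ?_⟩
        have := h j.succ
        rwa [← Fin.succ_castSucc] at this

/-- The alternating lazy/arrow path family in the cycle quiver. -/
def cyclePath (n : ℕ) (hn : 0 < n) (k : ℕ) : (CnQuiver n hn).QPath :=
  if k % 2 = 0 then Quiv.QPath.lazy (CnQuiver n hn) ((k / 2 : ℕ) : ZMod n)
  else Quiv.QPath.ofArrow (CnQuiver n hn) ((k / 2 : ℕ) : ZMod n)

lemma cyclePath_src (n : ℕ) (hn : 0 < n) (k : ℕ) :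
    (cyclePath n hn k).src = ((k / 2 : ℕ) : ZMod n) := by
  unfold cyclePath; split <;> rfl

lemma cyclePath_tgt (n : ℕ) (hn : 0 < n) (k : ℕ) :
    (cyclePath n hn k).tgt = (((k + 1) / 2 : ℕ) : ZMod n) := by
  unfold cyclePath
  split
  · rename_i h
    have : (k + 1) / 2 = k / 2 := by omega
    rw [this]; rfl
  · rename_i h
    have : (k + 1) / 2 = k / 2 + 1 := by omega
    rw [this]
    show ((k / 2 : ℕ) : ZMod n) + 1 = ((k / 2 + 1 : ℕ) : ZMod n)
    push_cast
    ring

end Aux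

/-- A path algebra of the oriented `n`-cycle satisfies no nonzero
multilinear identity of degree `d < 2n`: if a multilinear combination vanishes on all
tuples, all its coefficients are zero. -/
theorem pathAlgebra_cycle_no_low_degree_identity (F : Type) [Field F] (n : ℕ) (hn : 0 < n)
    (A : Type) [Ring A] [Algebra F A] (P : PathAlgebra F (CnQuiver n hn) A)
    (d : ℕ) (hd1 : 1 ≤ d) (hd2 : d ≤ 2 * n - 1)
    (c : Equiv.Perm (Fin d) → F)
    (hc : ∀ a : Fin d → A,
      ∑ σ : Equiv.Perm (Fin d), c σ • (List.ofFn fun i => a (σ i)).prod = 0) :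
    ∀ σ : Equiv.Perm (Fin d), c σ = 0 := by
  intro tau
  haveI : NeZero n := ⟨hn.ne'⟩
  obtain ⟨e, rfl⟩ : ∃ e, d = e + 1 := ⟨d - 1, by omega⟩
  have he : e ≤ 2 * n - 2 := by omega
  set p : Fin (e + 1) → (CnQuiver n hn).QPath := fun k => cyclePath n hn k.val with hp
  -- the key combinatorial fact: composability forces the identity permutation
  have key : ∀ ρ : Equiv.Perm (Fin (e + 1)),
      (∀ i : Fin e, (p (ρ i.castSucc)).tgt = (p (ρ i.succ)).src) → ρ = 1 := by
    intro ρ h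
    have hlt : ∀ i : Fin e, ρ i.castSucc < ρ i.succ := by
      intro i
      have h1 := h i
      rw [hp] at h1
      rw [cyclePath_tgt, cyclePath_src] at h1
      have ha : ((ρ i.castSucc).val + 1) / 2 < n := by
        have := (ρ i.castSucc).isLt; omega
      have hb : (ρ i.succ).val / 2 < n := by
        have := (ρ i.succ).isLt; omega
      have h2 : ((ρ i.castSucc).val + 1) / 2 = (ρ i.succ).val / 2 := by
        have h3 := congrArg ZMod.val h1
        rwa [ZMod.val_cast_of_lt ha, ZMod.val_cast_of_lt hb] at h3
      have hne : (ρ i.castSucc).val ≠ (ρ i.succ).val := by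
        intro hh
        exact absurd (ρ.injective (Fin.val_injective hh))
          (ne_of_lt (Fin.castSucc_lt_succ (i := i)))
      exact Fin.lt_def.mpr (by omega)
    have hmono : StrictMono (fun k => ρ k) := Fin.strictMono_iff_lt_succ.mpr hlt
    let g : Fin (e + 1) ≃o Fin (e + 1) :=
      { toEquiv := ρ, map_rel_iff' := hmono.le_iff_le }
    ext i
    exact Fin.coe_orderIso_apply g i
  -- evaluate the identity on basis elements
  have hc' := hc (fun i => P.b (p (tau⁻¹ i)))
  have hdecomp : ∀ σ : Equiv.Perm (Fin (e + 1)),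
      (List.ofFn fun i => P.b (p (tau⁻¹ (σ i)))).prod
        = P.b (p ((tau⁻¹ * σ) 0)) *
            ((List.ofFn fun i : Fin e => p ((tau⁻¹ * σ) i.succ)).map P.b).prod := by
    intro σ
    rw [show (List.ofFn fun i => P.b (p (tau⁻¹ (σ i)))) =
          (List.ofFn fun i => p ((tau⁻¹ * σ) i)).map P.b by
        rw [List.map_ofFn]; rfl]
    rw [List.ofFn_succ, List.map_cons, List.prod_cons]
  have hzero : ∀ σ : Equiv.Perm (Fin (e + 1)), σ ≠ tau →
      (List.ofFn fun i => P.b (p (tau⁻¹ (σ i)))).prod = 0 := by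
    intro σ hστ
    rw [hdecomp σ]
    apply P.prod_of_not_chain
    rw [chain_ofFn (fun x y => x.tgt = y.src) e (fun i => p ((tau⁻¹ * σ) i))]
    intro hch
    have h1 : tau⁻¹ * σ = 1 := key (tau⁻¹ * σ) hch
    exact hστ (inv_mul_eq_one.mp h1).symm
  have hτ : ∃ r : (CnQuiver n hn).QPath,
      (List.ofFn fun i => P.b (p (tau⁻¹ (tau i)))).prod = P.b r := by
    rw [hdecomp tau]
    apply P.prod_of_chain
    rw [chain_ofFn (fun x y => x.tgt = y.src) e (fun i => p ((tau⁻¹ * tau) i))]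
    intro i
    rw [inv_mul_cancel]
    simp only [Equiv.Perm.one_apply, hp]
    rw [cyclePath_tgt, cyclePath_src, Fin.val_succ, Fin.coe_castSucc]
  have hsum : (∑ σ : Equiv.Perm (Fin (e + 1)),
      c σ • (List.ofFn fun i => P.b (p (tau⁻¹ (σ i)))).prod)
        = c tau • (List.ofFn fun i => P.b (p (tau⁻¹ (tau i)))).prod :=
    Fintype.sum_eq_single tau (fun σ hσ => by rw [hzero σ hσ, smul_zero])
  rw [hsum] at hc'
  obtain ⟨r, hr⟩ := hτ
  rw [hr] at hc'
  rcases smul_eq_zero.mp hc' with h | h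
  · exact h
  · exact absurd h (P.indep.ne_zero r)
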